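/- Let f = (x² − z²)(x² + y² − z²) ∈ ℂ[x,y,z] (a smooth conic together with two tangent lines), let J_f = ⟨∂f/∂x, ∂f/∂y, ∂f/∂z⟩ be its Jacobian ideal, and let m = ⟨x, y, z⟩. Then the colon ideal (J_f : m) equals J_f; that is, J_f is saturated with respect to m, i.e. the curve f = 0 is a free plane curve. -/

import Mathlib

open MvPolynomial

noncomputable section ConicFreeAux

abbrev SS := MvPolynomial (Fin 3) ℂ

local notation "gg" => (2*X 0^2 + X 1^2 - 2*X 2^2 : SS)
local notation "hh" => (X 0^2 - X 2^2 : SS)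

/-- evaluation killing `y` -/
def ky : SS →ₐ[ℂ] SS := aeval ![X 0, 0, X 2]
/-- evaluation killing `x` -/
def kx : SS →ₐ[ℂ] SS := aeval ![0, X 1, X 2]

lemma ky_X0 : ky (X 0) = X 0 := by simp [ky]
lemma ky_X1 : ky (X 1) = 0 := by simp [ky]
lemma ky_X2 : ky (X 2) = X 2 := by simp [ky]
lemma ky_g : ky gg = 2*hh := by simp [ky, map_ofNat]; ring
lemma ky_h : ky hh = hh := by simp [ky]
lemma kx_X0 : kx (X 0) = 0 := by simp [kx]
lemma kx_X1 : kx (X 1) = X 1 := by simp [kx]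
lemma kx_X2 : kx (X 2) = X 2 := by simp [kx]

lemma X1_dvd_sub (p : SS) : (X 1 : SS) ∣ p - ky p := by
  induction p using MvPolynomial.induction_on with
  | C a => simp [ky]
  | add p q hp hq =>
    have e : p + q - ky (p+q) = (p - ky p) + (q - ky q) := by rw [map_add]; ring
    rw [e]; exact dvd_add hp hq
  | mul_X p j hp =>
    obtain ⟨c, hc⟩ := hp
    fin_cases j
    · show (X 1:SS) ∣ p * X 0 - ky (p * X 0)
      exact ⟨c * X 0, by have e : ky (p * X 0) = ky p * X 0 := by simp [ky]
                         rw [e]; linear_combination (X 0 : SS) * hc⟩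
    · show (X 1:SS) ∣ p * X 1 - ky (p * X 1)
      exact ⟨c * 0 + p, by have e : ky (p * X 1) = 0 := by simp [ky]
                           rw [e]; ring⟩
    · show (X 1:SS) ∣ p * X 2 - ky (p * X 2)
      exact ⟨c * X 2, by have e : ky (p * X 2) = ky p * X 2 := by simp [ky]
                         rw [e]; linear_combination (X 2 : SS) * hc⟩

lemma X0_dvd_sub (p : SS) : (X 0 : SS) ∣ p - kx p := by
  induction p using MvPolynomial.induction_on with
  | C a => simp [kx]
  | add p q hp hq =>
    have e : p + q - kx (p+q) = (p - kx p) + (q - kx q) := by rw [map_add]; ring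
    rw [e]; exact dvd_add hp hq
  | mul_X p j hp =>
    obtain ⟨c, hc⟩ := hp
    fin_cases j
    · show (X 0:SS) ∣ p * X 0 - kx (p * X 0)
      exact ⟨c * 0 + p, by have e : kx (p * X 0) = 0 := by simp [kx]
                           rw [e]; ring⟩
    · show (X 0:SS) ∣ p * X 1 - kx (p * X 1)
      exact ⟨c * X 1, by have e : kx (p * X 1) = kx p * X 1 := by simp [kx]
                         rw [e]; linear_combination (X 1 : SS) * hc⟩
    · show (X 0:SS) ∣ p * X 2 - kx (p * X 2)
      exact ⟨c * X 2, by have e : kx (p * X 2) = kx p * X 2 := by simp [kx]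
                         rw [e]; linear_combination (X 2 : SS) * hc⟩

lemma not_dvd_eval (a b : SS) (v : Fin 3 → ℂ) (ha : eval v a = 0) (hb : eval v b ≠ 0) :
    ¬ a ∣ b := by
  rintro ⟨c, rfl⟩; exact hb (by rw [map_mul, ha, zero_mul])

lemma ne_zero_eval (a : SS) (v : Fin 3 → ℂ) (ha : eval v a ≠ 0) : a ≠ 0 := by
  rintro rfl; exact ha (map_zero _)

lemma prime_X0 : Prime (X 0 : SS) := by
  refine (MulEquiv.prime_iff (MvPolynomial.finSuccEquiv ℂ 2).toRingEquiv.toMulEquiv).mp ?_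
  have e : (MvPolynomial.finSuccEquiv ℂ 2).toRingEquiv.toMulEquiv (X 0)
      = (Polynomial.X : Polynomial (MvPolynomial (Fin 2) ℂ)) := finSuccEquiv_X_zero
  rw [e]; exact Polynomial.prime_X

lemma prime_Xi (i : Fin 3) : Prime (X i : SS) := by
  have h := (MulEquiv.prime_iff
    (renameEquiv ℂ (Equiv.swap (0 : Fin 3) i)).toRingEquiv.toMulEquiv (p := (X 0 : SS))).mpr prime_X0
  have e : (renameEquiv ℂ (Equiv.swap (0 : Fin 3) i)).toRingEquiv.toMulEquiv (X 0 : SS)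
      = (X i : SS) := by
    show rename (Equiv.swap (0 : Fin 3) i) (X 0) = X i
    simp
  rwa [e] at h

def τ (c : ℂ) : SS →ₐ[ℂ] SS := aeval ![X 0 + C c * X 2, X 1, X 2]

lemma τ_comp (c d : ℂ) : (τ c).comp (τ d) = τ (c + d) := by
  apply MvPolynomial.algHom_ext
  intro i
  fin_cases i <;> simp [τ, map_add, map_mul] <;> ring

def τe (c : ℂ) : SS ≃ₐ[ℂ] SS :=
  AlgEquiv.ofAlgHom (τ c) (τ (-c))
    (by rw [τ_comp]; simp; apply MvPolynomial.algHom_ext; intro i; fin_cases i <;> simp [τ])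
    (by rw [τ_comp]; simp; apply MvPolynomial.algHom_ext; intro i; fin_cases i <;> simp [τ])

lemma prime_lin (c : ℂ) : Prime (X 0 + C c * X 2 : SS) := by
  have h := (MulEquiv.prime_iff (τe c).toRingEquiv.toMulEquiv (p := (X 0 : SS))).mpr prime_X0
  have e : (τe c).toRingEquiv.toMulEquiv (X 0 : SS) = X 0 + C c * X 2 := by
    show τ c (X 0) = _
    simp [τ]
  rwa [e] at h

lemma prime_xmz : Prime (X 0 - X 2 : SS) := by
  have h := prime_lin (-1)
  have e : (X 0 + C (-1:ℂ) * X 2 : SS) = X 0 - X 2 := by simp; ring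
  rwa [e] at h

lemma prime_xpz : Prime (X 0 + X 2 : SS) := by
  have h := prime_lin 1
  have e : (X 0 + C (1:ℂ) * X 2 : SS) = X 0 + X 2 := by simp
  rwa [e] at h

lemma mem_span_triple {a b c p : SS} :
    p ∈ Ideal.span {a, b, c} ↔ ∃ u v w, p = u*a + v*b + w*c := by
  constructor
  · intro hp
    rw [show ({a,b,c} : Set SS) = insert a {b,c} from rfl, Ideal.mem_span_insert] at hp
    obtain ⟨u, z, hz, hzz⟩ := hp
    obtain ⟨v, w, hvw⟩ := Ideal.mem_span_pair.mp hz
    exact ⟨u, v, w, by rw [hzz, ← hvw]; ring⟩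
  · rintro ⟨u, v, w, rfl⟩
    have ma : a ∈ Ideal.span {a,b,c} := Ideal.subset_span (by simp)
    have mb : b ∈ Ideal.span {a,b,c} := Ideal.subset_span (by simp)
    have mc : c ∈ Ideal.span {a,b,c} := Ideal.subset_span (by simp)
    exact Ideal.add_mem _ (Ideal.add_mem _ (Ideal.mul_mem_left _ _ ma)
      (Ideal.mul_mem_left _ _ mb)) (Ideal.mul_mem_left _ _ mc)

/-- The syzygy lemma: every syzygy of `(x g, y h, z g)` is a combination of
`σ = (z, 0, -x)` and `ρ = (-xy, g, yz)`. -/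
lemma SL (w1 w2 w3 : SS) (hw : w1*(X 0*gg) + w2*(X 1*hh) + w3*(X 2*gg) = 0) :
    ∃ Q e, w1 = Q*X 2 - e*(X 0*X 1) ∧ w2 = e*gg ∧ w3 = -(Q*X 0) + e*(X 1*X 2) := by
  have h0 : ky w1 * (X 0 * (2*hh)) + ky w3 * (X 2 * (2*hh)) = 0 := by
    have hc := congrArg ky hw
    simp only [map_add, map_mul, map_zero] at hc
    rw [ky_g, ky_h, ky_X0, ky_X1, ky_X2] at hc
    linear_combination hc
  have h2h : (2*hh : SS) ≠ 0 := ne_zero_eval _ ![1,0,0] (by simp)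
  have hcanc : ky w1 * X 0 + ky w3 * X 2 = 0 := by
    apply mul_left_cancel₀ h2h; linear_combination h0
  obtain ⟨q, hq⟩ : (X 2:SS) ∣ ky w1 :=
    ((prime_Xi 2).dvd_or_dvd (show (X 2:SS) ∣ ky w1 * X 0 from
      ⟨-(ky w3), by linear_combination hcanc⟩)).resolve_right
      (not_dvd_eval _ _ ![1,0,0] (by simp) (by simp))
  have hX2 : (X 2 : SS) ≠ 0 := ne_zero_eval _ ![0,0,1] (by simp)
  have hW3 : ky w3 = -(q * X 0) := by
    apply mul_left_cancel₀ hX2; linear_combination hcanc - X 0 * hq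
  obtain ⟨s1, hs1⟩ := X1_dvd_sub w1
  obtain ⟨s3, hs3⟩ := X1_dvd_sub w3
  have key : (X 1:SS) * (s1*(X 0*gg) + w2*hh + s3*(X 2*gg)) = 0 := by
    linear_combination hw - (X 0*gg)*hs1 - (X 2*gg)*hs3 - (X 0*gg)*hq - (X 2*gg)*hW3
  have e2 : s1*(X 0*gg) + w2*hh + s3*(X 2*gg) = 0 := by
    apply mul_left_cancel₀ (ne_zero_eval (X 1) ![0,1,0] (by simp)); linear_combination key
  obtain ⟨K1, hK1⟩ : (X 0 - X 2 : SS) ∣ (s1*X 0 + s3*X 2) :=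
    ((prime_xmz).dvd_or_dvd
      (show (X 0 - X 2 : SS) ∣ X 1^2*(s1*X 0 + s3*X 2) from
        ⟨-((X 0+X 2)*(w2 + 2*(s1*X 0+s3*X 2))), by linear_combination e2⟩)).resolve_left
      (not_dvd_eval _ _ ![1,1,1] (by simp) (by simp))
  have e3 : (X 0+X 2)*(w2 + 2*(s1*X 0+s3*X 2)) + X 1^2*K1 = 0 := by
    apply mul_left_cancel₀ (ne_zero_eval (X 0 - X 2) ![1,0,0] (by simp))
    linear_combination e2 - X 1^2*hK1
  obtain ⟨t, ht⟩ : (X 0 + X 2 : SS) ∣ K1 :=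
    ((prime_xpz).dvd_or_dvd
      (show (X 0 + X 2 : SS) ∣ X 1^2*K1 from
        ⟨-(w2 + 2*(s1*X 0+s3*X 2)), by linear_combination e3⟩)).resolve_left
      (not_dvd_eval _ _ ![1,1,-1] (by simp) (by simp))
  have hw2' : w2 + 2*(s1*X 0+s3*X 2) + X 1^2*t = 0 := by
    apply mul_left_cancel₀ (ne_zero_eval (X 0+X 2) ![1,0,0] (by simp))
    linear_combination e3 - X 1^2*ht
  have hK : s1*X 0 + s3*X 2 = hh*t := by
    linear_combination hK1 + (X 0-X 2)*ht
  have w2val : w2 = (-t)*gg := by linear_combination hw2' - 2*hK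
  obtain ⟨r, hr⟩ : (X 2:SS) ∣ (s1 - t*X 0) :=
    ((prime_Xi 2).dvd_or_dvd
      (show (X 2:SS) ∣ (s1 - t*X 0) * X 0 from ⟨-(s3 + t*X 2), by linear_combination hK⟩)).resolve_right
      (not_dvd_eval _ _ ![1,0,0] (by simp) (by simp))
  have hs3v : s3 = -(X 0*r) - t*X 2 := by
    apply mul_left_cancel₀ hX2; linear_combination hK - X 0*hr
  refine ⟨q + X 1*r, -t, ?_, ?_, ?_⟩
  · linear_combination hs1 + hq + X 1*hr
  · linear_combination w2val
  · linear_combination hs3 + hW3 + X 1*hs3v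

/-- The Koszul lemma for the regular sequence `(x, y, z)`. -/
lemma KL (a1 a2 a3 : SS) (ha : a1*X 0 + a2*X 1 + a3*X 2 = 0) :
    ∃ c1 c2 c3, a1 = c3*X 1 - c2*X 2 ∧ a2 = c1*X 2 - c3*X 0 ∧ a3 = c2*X 0 - c1*X 1 := by
  have h0 : kx a2 * X 1 + kx a3 * X 2 = 0 := by
    have hc := congrArg kx ha
    simp only [map_add, map_mul, map_zero] at hc
    rw [kx_X0, kx_X1, kx_X2] at hc
    linear_combination hc
  have hX2 : (X 2 : SS) ≠ 0 := ne_zero_eval _ ![0,0,1] (by simp)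
  obtain ⟨d, hd⟩ : (X 2:SS) ∣ kx a2 :=
    ((prime_Xi 2).dvd_or_dvd (show (X 2:SS) ∣ kx a2 * X 1 from
      ⟨-(kx a3), by linear_combination h0⟩)).resolve_right
      (not_dvd_eval _ _ ![0,1,0] (by simp) (by simp))
  have hA3 : kx a3 = -(X 1*d) := by
    apply mul_left_cancel₀ hX2; linear_combination h0 - X 1*hd
  obtain ⟨e2, he2⟩ := X0_dvd_sub a2
  obtain ⟨e3, he3⟩ := X0_dvd_sub a3
  have ha1 : a1 = -(X 1*e2) - X 2*e3 := by
    apply mul_left_cancel₀ (ne_zero_eval (X 0) ![1,0,0] (by simp))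
    linear_combination ha - X 1*he2 - X 1*hd - X 2*he3 - X 2*hA3
  exact ⟨d, e3, -e2, by linear_combination ha1, by linear_combination he2 + hd,
    by linear_combination he3 + hA3⟩

end ConicFreeAux

set_option maxHeartbeats 1600000 in
/-- The conic-line arrangement `(x² - z²)(x² + y² - z²) = 0` (a smooth conic with
two tangent lines) is a free plane curve: its Jacobian ideal is saturated with
respect to the irrelevant ideal `⟨x, y, z⟩`, i.e. `(J_f : m) = J_f`. -/
theorem conic_plus_two_tangent_lines_is_free
    (f : MvPolynomial (Fin 3) ℂ)
    (hf : f = (X 0 ^ 2 - X 2 ^ 2) * (X 0 ^ 2 + X 1 ^ 2 - X 2 ^ 2))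
    (Jf : Ideal (MvPolynomial (Fin 3) ℂ))
    (hJf : Jf = Ideal.span {pderiv 0 f, pderiv 1 f, pderiv 2 f})
    (m : Ideal (MvPolynomial (Fin 3) ℂ))
    (hm : m = Ideal.span {X 0, X 1, X 2}) :
    Submodule.colon Jf m = Jf := by
  subst hf
  -- the three scaled generators
  have h1 : pderiv 0 ((X 0 ^ 2 - X 2 ^ 2) * (X 0 ^ 2 + X 1 ^ 2 - X 2 ^ 2) : SS)
      = 2*(X 0*(2*X 0^2 + X 1^2 - 2*X 2^2)) := by
    simp [pderiv_mul, pderiv_pow]; ring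
  have h2 : pderiv 1 ((X 0 ^ 2 - X 2 ^ 2) * (X 0 ^ 2 + X 1 ^ 2 - X 2 ^ 2) : SS)
      = 2*(X 1*(X 0^2 - X 2^2)) := by
    simp [pderiv_mul, pderiv_pow]; ring
  have h3 : pderiv 2 ((X 0 ^ 2 - X 2 ^ 2) * (X 0 ^ 2 + X 1 ^ 2 - X 2 ^ 2) : SS)
      = (-2)*(X 2*(2*X 0^2 + X 1^2 - 2*X 2^2)) := by
    simp [pderiv_mul, pderiv_pow]; ring
  have hunit : (C (2⁻¹ : ℂ) : SS) * 2 = 1 := by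
    have e2 : (2 : SS) = C (2 : ℂ) := by rw [map_ofNat]
    rw [e2, ← C_mul]; norm_num
  have hJ : Jf = Ideal.span {X 0*(2*X 0^2 + X 1^2 - 2*X 2^2), X 1*(X 0^2 - X 2^2),
      X 2*(2*X 0^2 + X 1^2 - 2*X 2^2)} := by
    rw [hJf, h1, h2, h3]
    apply le_antisymm
    · rw [Ideal.span_le]
      rintro a ha
      simp only [Set.mem_insert_iff, Set.mem_singleton_iff] at ha
      rcases ha with rfl | rfl | rfl
      · exact Ideal.mul_mem_left _ _ (Ideal.subset_span (by simp))
      · exact Ideal.mul_mem_left _ _ (Ideal.subset_span (by simp))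
      · exact Ideal.mul_mem_left _ _ (Ideal.subset_span (by simp))
    · rw [Ideal.span_le]
      rintro a ha
      simp only [Set.mem_insert_iff, Set.mem_singleton_iff] at ha
      rcases ha with rfl | rfl | rfl
      · exact mem_span_triple.mpr ⟨C (2⁻¹ : ℂ), 0, 0,
          by linear_combination (-(X 0*(2*X 0^2 + X 1^2 - 2*X 2^2)) : SS) * hunit⟩
      · exact mem_span_triple.mpr ⟨0, C (2⁻¹ : ℂ), 0,
          by linear_combination (-(X 1*(X 0^2 - X 2^2)) : SS) * hunit⟩
      · exact mem_span_triple.mpr ⟨0, 0, - C (2⁻¹ : ℂ),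
          by linear_combination (-(X 2*(2*X 0^2 + X 1^2 - 2*X 2^2)) : SS) * hunit⟩
  apply le_antisymm
  · -- the hard inclusion
    intro p hp
    have hx := Submodule.mem_colon.mp hp (X 0) (by rw [hm]; exact Ideal.subset_span (by simp))
    have hy := Submodule.mem_colon.mp hp (X 1) (by rw [hm]; exact Ideal.subset_span (by simp))
    have hz := Submodule.mem_colon.mp hp (X 2) (by rw [hm]; exact Ideal.subset_span (by simp))
    rw [smul_eq_mul, hJ] at hx hy hz
    rw [hJ]
    obtain ⟨v11, v12, v13, hv1⟩ := mem_span_triple.mp hx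
    obtain ⟨v21, v22, v23, hv2⟩ := mem_span_triple.mp hy
    obtain ⟨v31, v32, v33, hv3⟩ := mem_span_triple.mp hz
    obtain ⟨q1, e1, E11, E12, E13⟩ := SL (X 2*v21 - X 1*v31) (X 2*v22 - X 1*v32)
      (X 2*v23 - X 1*v33) (by linear_combination X 1*hv3 - X 2*hv2)
    obtain ⟨q2, e2, E21, E22, E23⟩ := SL (X 0*v31 - X 2*v11) (X 0*v32 - X 2*v12)
      (X 0*v33 - X 2*v13) (by linear_combination X 2*hv1 - X 0*hv3)
    obtain ⟨q3, e3, E31, E32, E33⟩ := SL (X 1*v11 - X 0*v21) (X 1*v12 - X 0*v22)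
      (X 1*v13 - X 0*v23) (by linear_combination X 0*hv2 - X 1*hv1)
    have hEg : (e1*X 0 + e2*X 1 + e3*X 2) * (2*X 0^2 + X 1^2 - 2*X 2^2) = 0 := by
      linear_combination (-(X 0):SS)*E12 - X 1*E22 - X 2*E32
    have hE : e1*X 0 + e2*X 1 + e3*X 2 = 0 := by
      rcases mul_eq_zero.mp hEg with h' | h'
      · exact h'
      · exact absurd h' (ne_zero_eval _ ![0,1,0] (by simp))
    have hQz : (q1*X 0 + q2*X 1 + q3*X 2) * X 2 = 0 := by
      linear_combination (-(X 0):SS)*E11 - X 1*E21 - X 2*E31 + X 0*X 1*hE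
    have hQ : q1*X 0 + q2*X 1 + q3*X 2 = 0 := by
      rcases mul_eq_zero.mp hQz with h' | h'
      · exact h'
      · exact absurd h' (ne_zero_eval _ ![0,0,1] (by simp))
    obtain ⟨c1, c2, c3, hc1, hc2, hc3⟩ := KL _ _ _ hQ
    obtain ⟨d1, d2, d3, hd1, hd2, hd3⟩ := KL _ _ _ hE
    have k1 : X 1*(v11 + c1*X 2 - d1*(X 0*X 1))
        = X 0*(v21 + c2*X 2 - d2*(X 0*X 1)) := by
      linear_combination E31 + X 2*hc3 - X 0*X 1*hd3
    have k2 : X 1*(v12 + d1*(2*X 0^2 + X 1^2 - 2*X 2^2))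
        = X 0*(v22 + d2*(2*X 0^2 + X 1^2 - 2*X 2^2)) := by
      linear_combination E32 + (2*X 0^2 + X 1^2 - 2*X 2^2 : SS)*hd3
    have k3 : X 1*(v13 - c1*X 0 + d1*(X 1*X 2))
        = X 0*(v23 - c2*X 0 + d2*(X 1*X 2)) := by
      linear_combination E33 - X 0*hc3 + X 1*X 2*hd3
    have hnd : ¬ (X 0:SS) ∣ X 1 := not_dvd_eval _ _ ![0,1,0] (by simp) (by simp)
    obtain ⟨u1, hu1⟩ := ((prime_Xi 0).dvd_or_dvd ⟨_, k1⟩).resolve_left hnd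
    obtain ⟨u2, hu2⟩ := ((prime_Xi 0).dvd_or_dvd ⟨_, k2⟩).resolve_left hnd
    obtain ⟨u3, hu3⟩ := ((prime_Xi 0).dvd_or_dvd ⟨_, k3⟩).resolve_left hnd
    have hfin : X 0 * p = X 0 * (u1*(X 0*(2*X 0^2 + X 1^2 - 2*X 2^2))
        + u2*(X 1*(X 0^2 - X 2^2)) + u3*(X 2*(2*X 0^2 + X 1^2 - 2*X 2^2))) := by
      linear_combination hv1 + (X 0*(2*X 0^2 + X 1^2 - 2*X 2^2) : SS)*hu1
        + (X 1*(X 0^2 - X 2^2) : SS)*hu2 + (X 2*(2*X 0^2 + X 1^2 - 2*X 2^2) : SS)*hu3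
    have hp' : p = u1*(X 0*(2*X 0^2 + X 1^2 - 2*X 2^2))
        + u2*(X 1*(X 0^2 - X 2^2)) + u3*(X 2*(2*X 0^2 + X 1^2 - 2*X 2^2)) :=
      mul_left_cancel₀ (ne_zero_eval (X 0) ![1,0,0] (by simp)) hfin
    exact mem_span_triple.mpr ⟨u1, u2, u3, hp'⟩
  · -- the easy inclusion
    intro p hp
    refine Submodule.mem_colon.mpr fun q _ => ?_
    rw [smul_eq_mul]
    exact Ideal.mul_mem_right q _ hp
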